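/- Let C be a max-stable d-dimensional copula, ∅ ≠ J ⊆ D = {1,...,d}, and let s ∈ J. Denote by ℓ_A = -ln C_A(e^{-1},...,e^{-1}) the exponent measure coefficients of the margins. If λ^{(C_J)} := ∑_{∅≠A⊆J} (-1)^{|A|-1} ℓ_A ≠ 0, then the orthant tail dependence coefficient λ_J = [∑_{∅≠A⊆D} (-1)^{|A|-1} ℓ_A] / [∑_{∅≠A⊆J} (-1)^{|A|-1} ℓ_A] satisfies λ_J = λ^{(C_D)} / λ^{(C_J)}, where λ^{(C_D)} = ∑_{∅≠A⊆D} (-1)^{|A|-1} ℓ_A; i.e., λ_J equals the ratio of the full inclusion–exclusion sum over D to that over J. -/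

import Mathlib

open Real Filter

/-- for a max-stable copula the orthant tail dependence
coefficient `λ_J` equals the ratio `λ^{(C_D)} / λ^{(C_J)}` of
inclusion–exclusion sums of the extremal coefficients. -/
theorem stmt15 (d : ℕ) (C : (Fin d → ℝ) → ℝ)
    (hpos : ∀ u : Fin d → ℝ, (∀ i, u i ∈ Set.Ioc (0:ℝ) 1) → 0 < C u)
    (hms : ∀ t : ℝ, 0 < t → ∀ u : Fin d → ℝ, (∀ i, u i ∈ Set.Ioc (0:ℝ) 1) →
      C (fun i => u i ^ t) = (C u) ^ t)
    (ℓ : Finset (Fin d) → ℝ)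
    (hℓ : ∀ A, ℓ A = -Real.log (C (fun i => if i ∈ A then Real.exp (-1) else 1)))
    (J : Finset (Fin d)) (hJ : J.Nonempty) (s : Fin d) (hs : s ∈ J)
    (hden : (∑ A ∈ J.powerset.filter (fun A => A ≠ ∅),
      (-1:ℝ) ^ (A.card - 1) * ℓ A) ≠ 0)
    (lamJ : ℝ)
    (hlamJ : Tendsto (fun u : ℝ =>
      (∑ A ∈ (Finset.univ : Finset (Fin d)).powerset.filter (fun A => A ≠ ∅),
        (-1:ℝ) ^ (A.card - 1) *
          Real.log (C (fun i => if i ∈ A then u else 1))) /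
      (∑ A ∈ J.powerset.filter (fun A => A ≠ ∅),
        (-1:ℝ) ^ (A.card - 1) *
          Real.log (C (fun i => if i ∈ A then u else 1))))
      (nhdsWithin 1 (Set.Iio 1)) (nhds lamJ)) :
    lamJ = (∑ A ∈ (Finset.univ : Finset (Fin d)).powerset.filter (fun A => A ≠ ∅),
        (-1:ℝ) ^ (A.card - 1) * ℓ A) /
      (∑ A ∈ J.powerset.filter (fun A => A ≠ ∅),
        (-1:ℝ) ^ (A.card - 1) * ℓ A) := by
  set SD := (∑ A ∈ (Finset.univ : Finset (Fin d)).powerset.filter (fun A => A ≠ ∅),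
      (-1:ℝ) ^ (A.card - 1) * ℓ A) with hSD
  set SJ := (∑ A ∈ J.powerset.filter (fun A => A ≠ ∅),
      (-1:ℝ) ^ (A.card - 1) * ℓ A) with hSJ
  -- the key pointwise identity on (0,1)
  have key : ∀ u : ℝ, u ∈ Set.Ioo (0:ℝ) 1 → ∀ A : Finset (Fin d),
      Real.log (C (fun i => if i ∈ A then u else 1)) = (-Real.log u) * (-ℓ A) := by
    intro u hu A
    set t := -Real.log u with ht
    have hlogu : Real.log u < 0 := Real.log_neg hu.1 hu.2
    have htpos : 0 < t := by simpa [ht] using neg_pos.mpr hlogu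
    set v : Fin d → ℝ := fun i => if i ∈ A then Real.exp (-1) else 1 with hv
    have hvmem : ∀ i, v i ∈ Set.Ioc (0:ℝ) 1 := by
      intro i
      by_cases h : i ∈ A <;> simp [hv, h, Real.exp_pos, Real.exp_le_one_iff]
    have hpow : (fun i => v i ^ t) = (fun i => if i ∈ A then u else 1) := by
      funext i
      by_cases h : i ∈ A
      · have : Real.exp (-1) ^ t = u := by
          rw [← Real.exp_log (Real.exp_pos (-1)) ]
          rw [Real.log_exp, ← Real.exp_log hu.1]
          rw [← Real.exp_mul]
          ring_nf
          simp [ht]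
        simp [hv, h, this]
      · simp [hv, h]
    have := hms t htpos v hvmem
    rw [hpow] at this
    rw [this, Real.log_rpow (hpos v hvmem)]
    have : Real.log (C v) = -ℓ A := by rw [hℓ A]; ring_nf; rfl
    rw [this]
  have hconstEq : ∀ᶠ u in nhdsWithin (1:ℝ) (Set.Iio 1),
      ((∑ A ∈ (Finset.univ : Finset (Fin d)).powerset.filter (fun A => A ≠ ∅),
        (-1:ℝ) ^ (A.card - 1) *
          Real.log (C (fun i => if i ∈ A then u else 1))) /
      (∑ A ∈ J.powerset.filter (fun A => A ≠ ∅),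
        (-1:ℝ) ^ (A.card - 1) *
          Real.log (C (fun i => if i ∈ A then u else 1)))) = SD / SJ := by
    filter_upwards [Ioo_mem_nhdsLT_of_mem (by norm_num : (1:ℝ) ∈ Set.Ioc 0 1)] with u hu
    have ht : (-Real.log u) ≠ 0 := by
      have : Real.log u < 0 := Real.log_neg hu.1 hu.2
      exact ne_of_gt (neg_pos.mpr this)
    have hnum : (∑ A ∈ (Finset.univ : Finset (Fin d)).powerset.filter (fun A => A ≠ ∅),
        (-1:ℝ) ^ (A.card - 1) *
          Real.log (C (fun i => if i ∈ A then u else 1))) = (-(-Real.log u)) * SD := by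
      rw [hSD, Finset.mul_sum]
      refine Finset.sum_congr rfl fun A _ => ?_
      rw [key u hu A]; ring
    have hden' : (∑ A ∈ J.powerset.filter (fun A => A ≠ ∅),
        (-1:ℝ) ^ (A.card - 1) *
          Real.log (C (fun i => if i ∈ A then u else 1))) = (-(-Real.log u)) * SJ := by
      rw [hSJ, Finset.mul_sum]
      refine Finset.sum_congr rfl fun A hA => ?_
      rw [key u hu A]; ring
    rw [hnum, hden']
    exact mul_div_mul_left _ _ (by simpa using ht)
  have h2 : Tendsto (fun u : ℝ =>
      (∑ A ∈ (Finset.univ : Finset (Fin d)).powerset.filter (fun A => A ≠ ∅),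
        (-1:ℝ) ^ (A.card - 1) *
          Real.log (C (fun i => if i ∈ A then u else 1))) /
      (∑ A ∈ J.powerset.filter (fun A => A ≠ ∅),
        (-1:ℝ) ^ (A.card - 1) *
          Real.log (C (fun i => if i ∈ A then u else 1))))
      (nhdsWithin 1 (Set.Iio 1)) (nhds (SD / SJ)) :=
    Filter.Tendsto.congr' (hconstEq.mono fun u h => h.symm) tendsto_const_nhds
  exact tendsto_nhds_unique hlamJ h2
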